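/- For N even, the transfer matrix has the asymptotic behavior lim_{λ→0} λ^{N} T(λ) = (∏_{a=1}^{N} κ_aξ_a/i)·(Θ + Θ^{−1}) and lim_{λ→∞} λ^{−N} T(λ) = (∏_{a=1}^{N} κ_aξ_a^{−1}/i)·(Θ + Θ^{−1}) (limits taken entrywise, λ ranging over ℂ∖{0}). -/

import Mathlib

open Matrix Complex Filter Topology

namespace SG

/-- Index set for the basis of `(ℂ^p)^{⊗N}`. -/
abbrev Idx (p N : ℕ) := Fin N → ZMod p

/-- Operators on `(ℂ^p)^{⊗N}`, realized as matrices. -/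
abbrev Op (p N : ℕ) := Matrix (Idx p N) (Idx p N) ℂ

/-- The square root of `q`: `q^{1/2} := q^{(p+1)/2}`. -/
noncomputable def qh (p : ℕ) (q : ℂ) : ℂ := q ^ ((p + 1) / 2)

/-- The operator `𝗎_n = u_n · (shift at site n)`, `𝗎_n|k⟩ = u_n |k-1⟩`. -/
noncomputable def uop (p N : ℕ) (u : Fin N → ℂ) (n : Fin N) : Op p N :=
  Matrix.of fun f g => if f = Function.update g n (g n - 1) then u n else 0

/-- The inverse of `𝗎_n`. -/
noncomputable def uopInv (p N : ℕ) (u : Fin N → ℂ) (n : Fin N) : Op p N :=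
  Matrix.of fun f g => if f = Function.update g n (g n + 1) then (u n)⁻¹ else 0

/-- The operator `𝗏_n = v_n · (clock at site n)`, `𝗏_n|k⟩ = v_n q^k |k⟩`. -/
noncomputable def vop (p N : ℕ) (q : ℂ) (v : Fin N → ℂ) (n : Fin N) : Op p N :=
  Matrix.diagonal fun g => v n * q ^ (g n).val

/-- The inverse of `𝗏_n`. -/
noncomputable def vopInv (p N : ℕ) (q : ℂ) (v : Fin N → ℂ) (n : Fin N) : Op p N :=
  Matrix.diagonal fun g => (v n * q ^ (g n).val)⁻¹

/-- The Lax matrix `L_n(λ)`. -/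
noncomputable def Lax (p N : ℕ) [NeZero p] (q : ℂ) (κ ξ u v : Fin N → ℂ) (n : Fin N)
    (lam : ℂ) : Matrix (Fin 2) (Fin 2) (Op p N) :=
  !![κ n • (uop p N u n *
        ((qh p q)⁻¹ • (κ n • vop p N q v n) + qh p q • ((κ n)⁻¹ • vopInv p N q v n))),
     (κ n / Complex.I) • ((lam / ξ n) • vop p N q v n - (lam / ξ n)⁻¹ • vopInv p N q v n);
     (κ n / Complex.I) • ((lam / ξ n) • vopInv p N q v n - (lam / ξ n)⁻¹ • vop p N q v n),
     κ n • (uopInv p N u n *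
        (qh p q • ((κ n)⁻¹ • vop p N q v n) + (qh p q)⁻¹ • (κ n • vopInv p N q v n)))]

/-- The monodromy matrix `M(λ) = L_N(λ) ⋯ L_1(λ)`. -/
noncomputable def Mon (p N : ℕ) [NeZero p] (q : ℂ) (κ ξ u v : Fin N → ℂ) (lam : ℂ) :
    Matrix (Fin 2) (Fin 2) (Op p N) :=
  (((List.finRange N).map fun n => Lax p N q κ ξ u v n lam).reverse).prod

/-- `A(λ)`, the (1,1) entry of the monodromy matrix. -/
noncomputable def Amat (p N : ℕ) [NeZero p] (q : ℂ) (κ ξ u v : Fin N → ℂ) (lam : ℂ) :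
    Op p N := Mon p N q κ ξ u v lam 0 0

/-- `B(λ)`, the (1,2) entry of the monodromy matrix. -/
noncomputable def Bmat (p N : ℕ) [NeZero p] (q : ℂ) (κ ξ u v : Fin N → ℂ) (lam : ℂ) :
    Op p N := Mon p N q κ ξ u v lam 0 1

/-- `C(λ)`, the (2,1) entry of the monodromy matrix. -/
noncomputable def Cmat (p N : ℕ) [NeZero p] (q : ℂ) (κ ξ u v : Fin N → ℂ) (lam : ℂ) :
    Op p N := Mon p N q κ ξ u v lam 1 0

/-- `D(λ)`, the (2,2) entry of the monodromy matrix. -/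
noncomputable def Dmat (p N : ℕ) [NeZero p] (q : ℂ) (κ ξ u v : Fin N → ℂ) (lam : ℂ) :
    Op p N := Mon p N q κ ξ u v lam 1 1

/-- The transfer matrix `T(λ) = A(λ) + D(λ)`. -/
noncomputable def Tmat (p N : ℕ) [NeZero p] (q : ℂ) (κ ξ u v : Fin N → ℂ) (lam : ℂ) :
    Op p N := Amat p N q κ ξ u v lam + Dmat p N q κ ξ u v lam

/-- The grading charge `Θ = ∏_{n=1}^N 𝗏_n^{(-1)^n}` (sites `n : Fin N` correspond to
the 1-indexed site `n+1`, whence the exponent `(-1)^{n+1}`); it is a diagonal operator. -/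
noncomputable def Theta (p N : ℕ) (q : ℂ) (v : Fin N → ℂ) : Op p N :=
  Matrix.diagonal fun g => ∏ n : Fin N, (v n * q ^ (g n).val) ^ ((-1 : ℤ) ^ ((n : ℕ) + 1))

/-- The inverse `Θ^{-1}` of the grading charge. -/
noncomputable def ThetaInv (p N : ℕ) (q : ℂ) (v : Fin N → ℂ) : Op p N :=
  Matrix.diagonal fun g => ∏ n : Fin N, (v n * q ^ (g n).val) ^ ((-1 : ℤ) ^ (n : ℕ))

/-- The average `𝒪(λ) = ∏_{k=1}^p O(q^k λ)` of a commuting family `O`. -/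
noncomputable def avg (p N : ℕ) [NeZero p] (q : ℂ) (O : ℂ → Op p N) (lam : ℂ) : Op p N :=
  ((List.range p).map fun k => O (q ^ (k + 1) * lam)).prod

noncomputable def Pm (p N : ℕ) [NeZero p] (q : ℂ) (κ ξ v : Fin N → ℂ) (n : Fin N) :
    Matrix (Fin 2) (Fin 2) (Op p N) :=
  !![0, (κ n * (ξ n)⁻¹ / Complex.I) • vop p N q v n;
     (κ n * (ξ n)⁻¹ / Complex.I) • vopInv p N q v n, 0]

noncomputable def Qm (p N : ℕ) [NeZero p] (q : ℂ) (κ u v : Fin N → ℂ) (n : Fin N) :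
    Matrix (Fin 2) (Fin 2) (Op p N) :=
  !![κ n • (uop p N u n *
        ((qh p q)⁻¹ • (κ n • vop p N q v n) + qh p q • ((κ n)⁻¹ • vopInv p N q v n))), 0;
     0, κ n • (uopInv p N u n *
        (qh p q • ((κ n)⁻¹ • vop p N q v n) + (qh p q)⁻¹ • (κ n • vopInv p N q v n)))]

noncomputable def Rm (p N : ℕ) [NeZero p] (q : ℂ) (κ ξ v : Fin N → ℂ) (n : Fin N) :
    Matrix (Fin 2) (Fin 2) (Op p N) :=
  !![0, (-(κ n * ξ n) / Complex.I) • vopInv p N q v n;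
     (-(κ n * ξ n) / Complex.I) • vop p N q v n, 0]

lemma smul_lax (p N : ℕ) [NeZero p] (q : ℂ) (κ ξ u v : Fin N → ℂ)
    (n : Fin N) (lam : ℂ) (hlam : lam ≠ 0) (hξn : ξ n ≠ 0) :
    lam • Lax p N q κ ξ u v n lam =
      lam ^ 2 • Pm p N q κ ξ v n + lam • Qm p N q κ u v n + Rm p N q κ ξ v n := by
  ext i j : 2
  fin_cases i <;> fin_cases j <;>
    simp only [Lax, Pm, Qm, Rm, Matrix.smul_apply, Matrix.add_apply, Matrix.zero_apply,
      Matrix.cons_val', Matrix.cons_val_zero, Matrix.cons_val_one, Matrix.head_cons,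
      Matrix.head_fin_const, Matrix.empty_val', Matrix.cons_val_fin_one, Matrix.of_apply,
      Fin.zero_eta, Fin.mk_one, Fin.isValue, Matrix.sub_apply,
      smul_zero, add_zero, zero_add] <;>
  · match_scalars <;> field_simp <;> try ring
    all_goals (simp only [Complex.I_sq]; ring)

lemma invsmul_lax (p N : ℕ) [NeZero p] (q : ℂ) (κ ξ u v : Fin N → ℂ)
    (n : Fin N) (lam : ℂ) (hlam : lam ≠ 0) (hξn : ξ n ≠ 0) :
    lam⁻¹ • Lax p N q κ ξ u v n lam =
      Pm p N q κ ξ v n + lam⁻¹ • Qm p N q κ u v n + (lam⁻¹) ^ 2 • Rm p N q κ ξ v n := by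
  ext i j : 2
  fin_cases i <;> fin_cases j <;>
    simp only [Lax, Pm, Qm, Rm, Matrix.smul_apply, Matrix.add_apply, Matrix.zero_apply,
      Matrix.cons_val', Matrix.cons_val_zero, Matrix.cons_val_one, Matrix.head_cons,
      Matrix.head_fin_const, Matrix.empty_val', Matrix.cons_val_fin_one, Matrix.of_apply,
      Fin.zero_eta, Fin.mk_one, Fin.isValue, Matrix.sub_apply,
      smul_zero, add_zero, zero_add] <;>
  · match_scalars <;> field_simp <;> try ring
    all_goals (simp only [Complex.I_sq]; ring)

lemma step_prod {M : Type*} [Monoid M] (n : ℕ) (f : ℕ → M) :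
    ((List.range (n+1)).map f).reverse.prod = f n * ((List.range n).map f).reverse.prod := by
  rw [List.range_succ]; simp

lemma antiprod {R : Type*} [CommRing R] (a b : ℕ → R) (m : ℕ) :
    ((List.range (2*m)).map (fun n => !![(0:R), a n; b n, 0])).reverse.prod
      = !![∏ n ∈ Finset.range (2*m), (if Even n then b n else a n), 0;
           0, ∏ n ∈ Finset.range (2*m), (if Even n then a n else b n)] := by
  induction m with
  | zero => simp [Matrix.one_fin_two]
  | succ m ih =>
    have h2 : 2*(m+1) = (2*m) + 1 + 1 := by ring
    rw [h2, step_prod, step_prod, ih, Finset.prod_range_succ, Finset.prod_range_succ,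
      Finset.prod_range_succ, Finset.prod_range_succ]
    have he : Even (2*m) := even_two_mul m
    have ho : ¬ Even (2*m+1) := by simp [Nat.even_add_one, he]
    rw [Matrix.mul_fin_two, Matrix.mul_fin_two]
    ext i j
    fin_cases i <;> fin_cases j <;> simp [he, ho] <;> ring

lemma prod_map_smul {S : Type*} [Ring S] [Algebra ℂ S] (c : ℂ) :
    ∀ l : List S, (l.map fun A => c • A).prod = c ^ l.length • l.prod
  | [] => by simp
  | A :: l => by
    simp only [List.map_cons, List.prod_cons, prod_map_smul c l, List.length_cons]
    rw [smul_mul_assoc, mul_smul_comm, smul_smul, pow_succ, mul_comm]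

lemma finmap_eq {α : Type*} (N : ℕ) (F : Fin N → α) (g : ℕ → α)
    (h : ∀ i : Fin N, g i.val = F i) :
    (List.finRange N).map F = (List.range N).map g := by
  rw [← List.map_coe_finRange_eq_range, List.map_map]
  exact (List.map_congr_left (fun i _ => (h i).symm))

lemma neg_prod_even {N : ℕ} (hN : Even N) (c : Fin N → ℂ) :
    (∏ i : Fin N, (-(c i))) = ∏ i : Fin N, c i := by
  calc (∏ i : Fin N, (-(c i))) = ∏ i : Fin N, ((-1) * c i) := by simp
  _ = (∏ _i : Fin N, (-1 : ℂ)) * ∏ i : Fin N, c i := Finset.prod_mul_distrib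
  _ = ∏ i : Fin N, c i := by
      rw [Finset.prod_const, Finset.card_univ, Fintype.card_fin, hN.neg_one_pow, one_mul]

lemma Rprod' (p N : ℕ) [NeZero p] (q : ℂ) (κ ξ v : Fin N → ℂ) (m : ℕ) (hN2 : N = 2*m) :
    ((List.finRange N).map (Rm p N q κ ξ v)).reverse.prod =
      !![(∏ a : Fin N, (κ a * ξ a / Complex.I)) • ThetaInv p N q v, 0;
         0, (∏ a : Fin N, (κ a * ξ a / Complex.I)) • Theta p N q v] := by
  classical
  subst hN2
  have hNe : Even (2*m) := even_two_mul m
  set dR := Matrix.diagonalRingHom (Idx p (2*m)) ℂ with hdR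
  set a : ℕ → (Idx p (2*m) → ℂ) := fun k =>
    if h : k < 2*m then
      (fun g => -(κ ⟨k,h⟩ * ξ ⟨k,h⟩) / Complex.I * (v ⟨k,h⟩ * q ^ (g ⟨k,h⟩).val)⁻¹)
    else 1 with ha
  set b : ℕ → (Idx p (2*m) → ℂ) := fun k =>
    if h : k < 2*m then
      (fun g => -(κ ⟨k,h⟩ * ξ ⟨k,h⟩) / Complex.I * (v ⟨k,h⟩ * q ^ (g ⟨k,h⟩).val))
    else 1 with hb
  have hpt : ∀ i : Fin (2*m), dR.mapMatrix !![(0 : Idx p (2*m) → ℂ), a i.val; b i.val, 0]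
      = Rm p (2*m) q κ ξ v i := by
    intro i
    have hi : (i : ℕ) < 2*m := i.isLt
    refine Matrix.ext fun r s => ?_
    fin_cases r <;> fin_cases s <;>
      simp only [RingHom.mapMatrix_apply, Matrix.map_apply,
        Matrix.cons_val', Matrix.cons_val_zero, Matrix.cons_val_one, Matrix.head_cons,
        Matrix.head_fin_const, Matrix.empty_val', Matrix.cons_val_fin_one,
        Fin.zero_eta, Fin.mk_one, Fin.isValue, Matrix.of_apply, Rm, ha, hb, hi, dif_pos,
        Fin.eta, hdR, Matrix.diagonalRingHom_apply, RingHom.coe_mk, MonoidHom.coe_mk, OneHom.coe_mk,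
        vop, vopInv]
    all_goals refine Matrix.ext fun g1 g2 => ?_
    all_goals simp only [Matrix.diagonal_apply, Matrix.smul_apply, Matrix.zero_apply,
      Pi.zero_apply, smul_eq_mul, mul_ite, mul_zero, ite_self]
    all_goals split <;> first | rfl | ring
  have hmap : (List.finRange (2*m)).map (Rm p (2*m) q κ ξ v)
      = (List.range (2*m)).map (fun k => dR.mapMatrix !![(0 : Idx p (2*m) → ℂ), a k; b k, 0]) :=
    finmap_eq (2*m) _ _ hpt
  have hmm : (List.range (2*m)).map (fun k => dR.mapMatrix !![(0 : Idx p (2*m) → ℂ), a k; b k, 0])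
      = ((List.range (2*m)).map (fun k => !![(0 : Idx p (2*m) → ℂ), a k; b k, 0])).map
          dR.mapMatrix := by
    rw [List.map_map]; rfl
  rw [hmap, hmm, ← List.map_reverse, ← map_list_prod (dR.mapMatrix), antiprod]
  -- pointwise evaluation of the two diagonal products
  have h00 : (∏ n ∈ Finset.range (2*m), (if Even n then b n else a n))
      = fun g => (∏ i : Fin (2*m), (κ i * ξ i / Complex.I)) *
          ∏ n : Fin (2*m), (v n * q ^ (g n).val) ^ ((-1 : ℤ) ^ (n : ℕ)) := by
    funext g
    rw [Finset.prod_apply]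
    have hsplit : ∀ n ∈ Finset.range (2*m), (if Even n then b n else a n) g
        = if Even n then b n g else a n g := by
      intro n _; rw [apply_ite (fun f : Idx p (2*m) → ℂ => f g)]
    rw [Finset.prod_congr rfl hsplit, ← Fin.prod_univ_eq_prod_range
      (fun k => if Even k then b k g else a k g) (2*m)]
    have h3 : ∀ i : Fin (2*m), (if Even (i : ℕ) then b (i : ℕ) g else a (i : ℕ) g)
        = (-(κ i * ξ i) / Complex.I) * ((v i * q ^ (g i).val) ^ ((-1 : ℤ) ^ (i : ℕ))) := by
      intro i
      have hi : (i : ℕ) < 2*m := i.isLt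
      rcases Nat.even_or_odd (i : ℕ) with h | h
      · simp [hb, hi, dif_pos, Fin.eta, h, h.neg_one_pow]
      · have hne : ¬ Even (i : ℕ) := by rw [Nat.even_iff]; rw [Nat.odd_iff] at h; omega
        simp [ha, hi, dif_pos, Fin.eta, hne, h.neg_one_pow, _root_.zpow_neg_one]
    rw [Finset.prod_congr rfl (fun i _ => h3 i), Finset.prod_mul_distrib]
    congr 1
    simpa only [neg_div] using neg_prod_even hNe (fun i => κ i * ξ i / Complex.I)
  have h11 : (∏ n ∈ Finset.range (2*m), (if Even n then a n else b n))
      = fun g => (∏ i : Fin (2*m), (κ i * ξ i / Complex.I)) *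
          ∏ n : Fin (2*m), (v n * q ^ (g n).val) ^ ((-1 : ℤ) ^ ((n : ℕ) + 1)) := by
    funext g
    rw [Finset.prod_apply]
    have hsplit : ∀ n ∈ Finset.range (2*m), (if Even n then a n else b n) g
        = if Even n then a n g else b n g := by
      intro n _; rw [apply_ite (fun f : Idx p (2*m) → ℂ => f g)]
    rw [Finset.prod_congr rfl hsplit, ← Fin.prod_univ_eq_prod_range
      (fun k => if Even k then a k g else b k g) (2*m)]
    have h3 : ∀ i : Fin (2*m), (if Even (i : ℕ) then a (i : ℕ) g else b (i : ℕ) g)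
        = (-(κ i * ξ i) / Complex.I) *
            ((v i * q ^ (g i).val) ^ ((-1 : ℤ) ^ ((i : ℕ) + 1))) := by
      intro i
      have hi : (i : ℕ) < 2*m := i.isLt
      rcases Nat.even_or_odd (i : ℕ) with h | h
      · have h1 : Odd ((i : ℕ) + 1) := Even.add_one h
        simp [ha, hi, dif_pos, Fin.eta, h, h1.neg_one_pow, _root_.zpow_neg_one]
      · have hne : ¬ Even (i : ℕ) := by rw [Nat.even_iff]; rw [Nat.odd_iff] at h; omega
        have h1 : Even ((i : ℕ) + 1) := Odd.add_one h
        simp [hb, hi, dif_pos, Fin.eta, hne, h1.neg_one_pow]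
    rw [Finset.prod_congr rfl (fun i _ => h3 i), Finset.prod_mul_distrib]
    congr 1
    simpa only [neg_div] using neg_prod_even hNe (fun i => κ i * ξ i / Complex.I)
  refine Matrix.ext fun r s => ?_
  fin_cases r <;> fin_cases s <;>
    simp only [RingHom.mapMatrix_apply, Matrix.map_apply,
      Matrix.cons_val', Matrix.cons_val_zero, Matrix.cons_val_one, Matrix.head_cons,
      Matrix.head_fin_const, Matrix.empty_val', Matrix.cons_val_fin_one,
      Fin.zero_eta, Fin.mk_one, Fin.isValue, Matrix.of_apply, hdR,
      Matrix.diagonalRingHom_apply, RingHom.coe_mk, MonoidHom.coe_mk, OneHom.coe_mk,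
      h00, h11, Theta, ThetaInv]
  all_goals refine Matrix.ext fun g1 g2 => ?_
  all_goals simp only [Matrix.diagonal_apply, Matrix.smul_apply, Matrix.zero_apply,
    Pi.zero_apply, smul_eq_mul, mul_ite, mul_zero, ite_self]
  all_goals split <;> rfl

lemma Pprod' (p N : ℕ) [NeZero p] (q : ℂ) (κ ξ v : Fin N → ℂ) (m : ℕ) (hN2 : N = 2*m) :
    ((List.finRange N).map (Pm p N q κ ξ v)).reverse.prod =
      !![(∏ a : Fin N, (κ a * (ξ a)⁻¹ / Complex.I)) • Theta p N q v, 0;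
         0, (∏ a : Fin N, (κ a * (ξ a)⁻¹ / Complex.I)) • ThetaInv p N q v] := by
  classical
  subst hN2
  set dR := Matrix.diagonalRingHom (Idx p (2*m)) ℂ with hdR
  set a : ℕ → (Idx p (2*m) → ℂ) := fun k =>
    if h : k < 2*m then
      (fun g => κ ⟨k,h⟩ * (ξ ⟨k,h⟩)⁻¹ / Complex.I * (v ⟨k,h⟩ * q ^ (g ⟨k,h⟩).val))
    else 1 with ha
  set b : ℕ → (Idx p (2*m) → ℂ) := fun k =>
    if h : k < 2*m then
      (fun g => κ ⟨k,h⟩ * (ξ ⟨k,h⟩)⁻¹ / Complex.I * (v ⟨k,h⟩ * q ^ (g ⟨k,h⟩).val)⁻¹)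
    else 1 with hb
  have hpt : ∀ i : Fin (2*m), dR.mapMatrix !![(0 : Idx p (2*m) → ℂ), a i.val; b i.val, 0]
      = Pm p (2*m) q κ ξ v i := by
    intro i
    have hi : (i : ℕ) < 2*m := i.isLt
    refine Matrix.ext fun r s => ?_
    fin_cases r <;> fin_cases s <;>
      simp only [RingHom.mapMatrix_apply, Matrix.map_apply,
        Matrix.cons_val', Matrix.cons_val_zero, Matrix.cons_val_one, Matrix.head_cons,
        Matrix.head_fin_const, Matrix.empty_val', Matrix.cons_val_fin_one,
        Fin.zero_eta, Fin.mk_one, Fin.isValue, Matrix.of_apply, Pm, ha, hb, hi, dif_pos,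
        Fin.eta, hdR, Matrix.diagonalRingHom_apply, RingHom.coe_mk, MonoidHom.coe_mk, OneHom.coe_mk,
        vop, vopInv]
    all_goals refine Matrix.ext fun g1 g2 => ?_
    all_goals simp only [Matrix.diagonal_apply, Matrix.smul_apply, Matrix.zero_apply,
      Pi.zero_apply, smul_eq_mul, mul_ite, mul_zero, ite_self]
    all_goals split <;> first | rfl | ring
  have hmap : (List.finRange (2*m)).map (Pm p (2*m) q κ ξ v)
      = (List.range (2*m)).map (fun k => dR.mapMatrix !![(0 : Idx p (2*m) → ℂ), a k; b k, 0]) :=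
    finmap_eq (2*m) _ _ hpt
  have hmm : (List.range (2*m)).map (fun k => dR.mapMatrix !![(0 : Idx p (2*m) → ℂ), a k; b k, 0])
      = ((List.range (2*m)).map (fun k => !![(0 : Idx p (2*m) → ℂ), a k; b k, 0])).map
          dR.mapMatrix := by
    rw [List.map_map]; rfl
  rw [hmap, hmm, ← List.map_reverse, ← map_list_prod (dR.mapMatrix), antiprod]
  have h00 : (∏ n ∈ Finset.range (2*m), (if Even n then b n else a n))
      = fun g => (∏ i : Fin (2*m), (κ i * (ξ i)⁻¹ / Complex.I)) *
          ∏ n : Fin (2*m), (v n * q ^ (g n).val) ^ ((-1 : ℤ) ^ ((n : ℕ) + 1)) := by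
    funext g
    rw [Finset.prod_apply]
    have hsplit : ∀ n ∈ Finset.range (2*m), (if Even n then b n else a n) g
        = if Even n then b n g else a n g := by
      intro n _; rw [apply_ite (fun f : Idx p (2*m) → ℂ => f g)]
    rw [Finset.prod_congr rfl hsplit, ← Fin.prod_univ_eq_prod_range
      (fun k => if Even k then b k g else a k g) (2*m)]
    have h3 : ∀ i : Fin (2*m), (if Even (i : ℕ) then b (i : ℕ) g else a (i : ℕ) g)
        = (κ i * (ξ i)⁻¹ / Complex.I) *
            ((v i * q ^ (g i).val) ^ ((-1 : ℤ) ^ ((i : ℕ) + 1))) := by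
      intro i
      have hi : (i : ℕ) < 2*m := i.isLt
      rcases Nat.even_or_odd (i : ℕ) with h | h
      · have h1 : Odd ((i : ℕ) + 1) := Even.add_one h
        simp [hb, hi, dif_pos, Fin.eta, h, h1.neg_one_pow, _root_.zpow_neg_one]
      · have hne : ¬ Even (i : ℕ) := by rw [Nat.even_iff]; rw [Nat.odd_iff] at h; omega
        have h1 : Even ((i : ℕ) + 1) := Odd.add_one h
        simp [ha, hi, dif_pos, Fin.eta, hne, h1.neg_one_pow]
    rw [Finset.prod_congr rfl (fun i _ => h3 i), Finset.prod_mul_distrib]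
  have h11 : (∏ n ∈ Finset.range (2*m), (if Even n then a n else b n))
      = fun g => (∏ i : Fin (2*m), (κ i * (ξ i)⁻¹ / Complex.I)) *
          ∏ n : Fin (2*m), (v n * q ^ (g n).val) ^ ((-1 : ℤ) ^ (n : ℕ)) := by
    funext g
    rw [Finset.prod_apply]
    have hsplit : ∀ n ∈ Finset.range (2*m), (if Even n then a n else b n) g
        = if Even n then a n g else b n g := by
      intro n _; rw [apply_ite (fun f : Idx p (2*m) → ℂ => f g)]
    rw [Finset.prod_congr rfl hsplit, ← Fin.prod_univ_eq_prod_range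
      (fun k => if Even k then a k g else b k g) (2*m)]
    have h3 : ∀ i : Fin (2*m), (if Even (i : ℕ) then a (i : ℕ) g else b (i : ℕ) g)
        = (κ i * (ξ i)⁻¹ / Complex.I) *
            ((v i * q ^ (g i).val) ^ ((-1 : ℤ) ^ (i : ℕ))) := by
      intro i
      have hi : (i : ℕ) < 2*m := i.isLt
      rcases Nat.even_or_odd (i : ℕ) with h | h
      · simp [ha, hi, dif_pos, Fin.eta, h, h.neg_one_pow]
      · have hne : ¬ Even (i : ℕ) := by rw [Nat.even_iff]; rw [Nat.odd_iff] at h; omega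
        simp [hb, hi, dif_pos, Fin.eta, hne, h.neg_one_pow, _root_.zpow_neg_one]
    rw [Finset.prod_congr rfl (fun i _ => h3 i), Finset.prod_mul_distrib]
  refine Matrix.ext fun r s => ?_
  fin_cases r <;> fin_cases s <;>
    simp only [RingHom.mapMatrix_apply, Matrix.map_apply,
      Matrix.cons_val', Matrix.cons_val_zero, Matrix.cons_val_one, Matrix.head_cons,
      Matrix.head_fin_const, Matrix.empty_val', Matrix.cons_val_fin_one,
      Fin.zero_eta, Fin.mk_one, Fin.isValue, Matrix.of_apply, hdR,
      Matrix.diagonalRingHom_apply, RingHom.coe_mk, MonoidHom.coe_mk, OneHom.coe_mk,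
      h00, h11, Theta, ThetaInv]
  all_goals refine Matrix.ext fun g1 g2 => ?_
  all_goals simp only [Matrix.diagonal_apply, Matrix.smul_apply, Matrix.zero_apply,
    Pi.zero_apply, smul_eq_mul, mul_ite, mul_zero, ite_self]
  all_goals split <;> rfl

noncomputable def Gf (p N : ℕ) [NeZero p] (q : ℂ) (κ ξ u v : Fin N → ℂ) (lam : ℂ) :
    Matrix (Fin 2) (Fin 2) (Op p N) :=
  ((List.finRange N).map fun n =>
    lam ^ 2 • Pm p N q κ ξ v n + lam • Qm p N q κ u v n + Rm p N q κ ξ v n).reverse.prod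

noncomputable def Hf (p N : ℕ) [NeZero p] (q : ℂ) (κ ξ u v : Fin N → ℂ) (mu : ℂ) :
    Matrix (Fin 2) (Fin 2) (Op p N) :=
  ((List.finRange N).map fun n =>
    Pm p N q κ ξ v n + mu • Qm p N q κ u v n + mu ^ 2 • Rm p N q κ ξ v n).reverse.prod

lemma smul_mon_gen (p N : ℕ) [NeZero p] (q : ℂ) (κ ξ u v : Fin N → ℂ) (c lam : ℂ) :
    c ^ N • Mon p N q κ ξ u v lam
      = ((List.finRange N).map fun n => c • Lax p N q κ ξ u v n lam).reverse.prod := by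
  have h1 : ((List.finRange N).map fun n => c • Lax p N q κ ξ u v n lam)
      = ((List.finRange N).map fun n => Lax p N q κ ξ u v n lam).map (fun A => c • A) := by
    rw [List.map_map]; rfl
  rw [h1, ← List.map_reverse, prod_map_smul]
  simp [Mon]

lemma G_eq (p N : ℕ) [NeZero p] (q : ℂ) (κ ξ u v : Fin N → ℂ) (hξ : ∀ n, ξ n ≠ 0)
    (lam : ℂ) (hlam : lam ≠ 0) :
    lam ^ N • Mon p N q κ ξ u v lam = Gf p N q κ ξ u v lam := by
  rw [smul_mon_gen, Gf]
  congr 2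
  exact List.map_congr_left (fun n _ => smul_lax p N q κ ξ u v n lam hlam (hξ n))

lemma H_eq (p N : ℕ) [NeZero p] (q : ℂ) (κ ξ u v : Fin N → ℂ) (hξ : ∀ n, ξ n ≠ 0)
    (lam : ℂ) (hlam : lam ≠ 0) :
    lam ^ (-(N : ℤ)) • Mon p N q κ ξ u v lam = Hf p N q κ ξ u v lam⁻¹ := by
  have hz : lam ^ (-(N : ℤ)) = (lam⁻¹) ^ N := by
    rw [_root_.zpow_neg, zpow_natCast, inv_pow]
  rw [hz, smul_mon_gen, Hf]
  congr 2
  exact List.map_congr_left (fun n _ => invsmul_lax p N q κ ξ u v n lam hlam (hξ n))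

lemma contG (p N : ℕ) [NeZero p] (q : ℂ) (κ ξ u v : Fin N → ℂ) :
    Continuous (Gf p N q κ ξ u v) := by
  unfold Gf
  simp only [← List.map_reverse]
  exact continuous_list_prod _ (fun i _ =>
    (((continuous_pow 2).smul continuous_const).add
      (continuous_id.smul continuous_const)).add continuous_const)

lemma contH (p N : ℕ) [NeZero p] (q : ℂ) (κ ξ u v : Fin N → ℂ) :
    Continuous (Hf p N q κ ξ u v) := by
  unfold Hf
  simp only [← List.map_reverse]
  exact continuous_list_prod _ (fun i _ =>
    (continuous_const.add (continuous_id.smul continuous_const)).add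
      ((continuous_pow 2).smul continuous_const))

lemma G_zero (p N : ℕ) [NeZero p] (q : ℂ) (κ ξ u v : Fin N → ℂ) :
    Gf p N q κ ξ u v 0 = ((List.finRange N).map (Rm p N q κ ξ v)).reverse.prod := by
  unfold Gf
  congr 2
  refine List.map_congr_left (fun n _ => ?_)
  simp

lemma H_zero (p N : ℕ) [NeZero p] (q : ℂ) (κ ξ u v : Fin N → ℂ) :
    Hf p N q κ ξ u v 0 = ((List.finRange N).map (Pm p N q κ ξ v)).reverse.prod := by
  unfold Hf
  congr 2
  refine List.map_congr_left (fun n _ => ?_)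
  simp

lemma entryG (p N : ℕ) [NeZero p] (q : ℂ) (κ ξ u v : Fin N → ℂ) (hξ : ∀ n, ξ n ≠ 0)
    (lam : ℂ) (hlam : lam ≠ 0) (f g : Idx p N) :
    lam ^ N * Tmat p N q κ ξ u v lam f g
      = (Gf p N q κ ξ u v lam 0 0 + Gf p N q κ ξ u v lam 1 1) f g := by
  rw [← G_eq p N q κ ξ u v hξ lam hlam]
  simp [Tmat, Amat, Dmat, Matrix.smul_apply, Matrix.add_apply, smul_eq_mul, mul_add]

lemma entryH (p N : ℕ) [NeZero p] (q : ℂ) (κ ξ u v : Fin N → ℂ) (hξ : ∀ n, ξ n ≠ 0)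
    (lam : ℂ) (hlam : lam ≠ 0) (f g : Idx p N) :
    lam ^ (-(N : ℤ)) * Tmat p N q κ ξ u v lam f g
      = (Hf p N q κ ξ u v lam⁻¹ 0 0 + Hf p N q κ ξ u v lam⁻¹ 1 1) f g := by
  rw [← H_eq p N q κ ξ u v hξ lam hlam]
  simp [Tmat, Amat, Dmat, Matrix.smul_apply, Matrix.add_apply, smul_eq_mul, mul_add]
/-- For `N` even, entrywise asymptotics of the transfer matrix:
`lim_{λ→0} λ^N T(λ) = (∏ κ_a ξ_a/i)·(Θ + Θ^{-1})` and
`lim_{λ→∞} λ^{-N} T(λ) = (∏ κ_a ξ_a^{-1}/i)·(Θ + Θ^{-1})`. -/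
theorem statement2 (p N : ℕ) [NeZero p] (hp : Odd p) (hp1 : 1 < p)
    (q : ℂ) (hq : IsPrimitiveRoot q p)
    (κ ξ u v : Fin N → ℂ) (hκ : ∀ n, κ n ≠ 0) (hξ : ∀ n, ξ n ≠ 0)
    (hu : ∀ n, ‖u n‖ = 1) (hv : ∀ n, ‖v n‖ = 1)
    (hN : 0 < N) (hNeven : Even N) :
    ∀ f g : Idx p N,
      Tendsto (fun lam : ℂ => lam ^ N * Tmat p N q κ ξ u v lam f g) (𝓝[≠] (0 : ℂ))
        (𝓝 ((∏ a : Fin N, κ a * ξ a / Complex.I) *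
          (Theta p N q v + ThetaInv p N q v) f g)) ∧
      Tendsto (fun lam : ℂ => lam ^ (-(N : ℤ)) * Tmat p N q κ ξ u v lam f g)
        (Bornology.cobounded ℂ)
        (𝓝 ((∏ a : Fin N, κ a * (ξ a)⁻¹ / Complex.I) *
          (Theta p N q v + ThetaInv p N q v) f g)) := by
  intro f g
  obtain ⟨m, hm⟩ := hNeven
  have hN2 : N = 2 * m := by omega
  constructor
  · -- λ → 0
    have hcG : Continuous fun lam : ℂ =>
        (Gf p N q κ ξ u v lam 0 0 + Gf p N q κ ξ u v lam 1 1) f g :=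
      ((contG p N q κ ξ u v).matrix_elem 0 0).add
        ((contG p N q κ ξ u v).matrix_elem 1 1) |>.matrix_elem f g
    have hG0 : (Gf p N q κ ξ u v 0 0 0 + Gf p N q κ ξ u v 0 1 1) f g
        = (∏ a : Fin N, κ a * ξ a / Complex.I) *
            ((Theta p N q v + ThetaInv p N q v) f g) := by
      rw [G_zero, Rprod' p N q κ ξ v m hN2]
      simp [Matrix.smul_apply, Matrix.add_apply, smul_eq_mul]
      ring
    have htd := (hcG.tendsto 0).mono_left (nhdsWithin_le_nhds : 𝓝[≠] (0:ℂ) ≤ 𝓝 0)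
    rw [hG0] at htd
    refine htd.congr' ?_
    filter_upwards [self_mem_nhdsWithin] with lam hlam
    exact (entryG p N q κ ξ u v hξ lam hlam f g).symm
  · -- λ → ∞
    have hcH : Continuous fun mu : ℂ =>
        (Hf p N q κ ξ u v mu 0 0 + Hf p N q κ ξ u v mu 1 1) f g :=
      ((contH p N q κ ξ u v).matrix_elem 0 0).add
        ((contH p N q κ ξ u v).matrix_elem 1 1) |>.matrix_elem f g
    have hH0 : (Hf p N q κ ξ u v 0 0 0 + Hf p N q κ ξ u v 0 1 1) f g
        = (∏ a : Fin N, κ a * (ξ a)⁻¹ / Complex.I) *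
            ((Theta p N q v + ThetaInv p N q v) f g) := by
      rw [H_zero, Pprod' p N q κ ξ v m hN2]
      simp [Matrix.smul_apply, Matrix.add_apply, smul_eq_mul]
      ring
    have hinv : Tendsto (fun lam : ℂ => lam⁻¹) (Bornology.cobounded ℂ) (𝓝 0) :=
      tendsto_inv₀_cobounded
    have htd := (hcH.tendsto 0).comp hinv
    rw [hH0] at htd
    refine htd.congr' ?_
    filter_upwards [Bornology.eventually_ne_cobounded (0 : ℂ)] with lam hlam
    exact (entryH p N q κ ξ u v hξ lam hlam f g).symm

end SG
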